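/- Let p, q : ℝ^d → (0,∞) be twice continuously differentiable Lebesgue probability densities and let w : ℝ^d → [0,∞) be continuously differentiable with compact support. Define the multivariate weighted Hyvärinen score Ŝ(p,x;w) = Σ_{i=1}^d [2·(∂_i² p(x)/p(x))·w(x) − (∂_i p(x)/p(x))²·w(x) + 2·(∂_i p(x)/p(x))·∂_i w(x)]. Then ∫_{ℝ^d} Ŝ(p,x;w)·q(x) dx − ∫_{ℝ^d} Ŝ(q,x;w)·q(x) dx = ∫_{ℝ^d} Σ_{i=1}^d (∂_i p(x)/p(x) − ∂_i q(x)/q(x))²·q(x)·w(x) dx ≥ 0. -/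

import Mathlib

open MeasureTheory

noncomputable section

/-- The `i`-th partial derivative of `f : (Fin d → ℝ) → ℝ`. -/
def pder {d : ℕ} (i : Fin d) (f : (Fin d → ℝ) → ℝ) (x : Fin d → ℝ) : ℝ :=
  fderiv ℝ f x (Pi.single i 1)

/-- The multivariate weighted Hyvärinen score
`Ŝ(f,x;w) = Σ_i [2·(∂_i²f(x)/f(x))·w(x) − (∂_i f(x)/f(x))²·w(x) + 2·(∂_i f(x)/f(x))·∂_i w(x)]`. -/
def ShatD {d : ℕ} (w f : (Fin d → ℝ) → ℝ) (x : Fin d → ℝ) : ℝ :=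
  ∑ i : Fin d,
    (2 * (pder i (pder i f) x / f x) * w x - (pder i f x / f x) ^ 2 * w x
      + 2 * (pder i f x / f x) * pder i w x)

lemma pder_mul' {d : ℕ} (i : Fin d) {f g : (Fin d → ℝ) → ℝ} {x : Fin d → ℝ}
    (hf : DifferentiableAt ℝ f x) (hg : DifferentiableAt ℝ g x) :
    pder i (fun y => f y * g y) x = pder i f x * g x + f x * pder i g x := by
  simp only [pder, fderiv_fun_mul hf hg, ContinuousLinearMap.add_apply,
    ContinuousLinearMap.smul_apply, smul_eq_mul]
  ring

lemma pder_sub' {d : ℕ} (i : Fin d) {f g : (Fin d → ℝ) → ℝ} {x : Fin d → ℝ}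
    (hf : DifferentiableAt ℝ f x) (hg : DifferentiableAt ℝ g x) :
    pder i (fun y => f y - g y) x = pder i f x - pder i g x := by
  simp only [pder, fderiv_fun_sub hf hg, ContinuousLinearMap.sub_apply]

lemma pder_div' {d : ℕ} (i : Fin d) {f g : (Fin d → ℝ) → ℝ} {x : Fin d → ℝ}
    (hf : DifferentiableAt ℝ f x) (hfg : DifferentiableAt ℝ (fun y => f y / g y) x)
    (hg : DifferentiableAt ℝ g x) (hg0 : ∀ y, g y ≠ 0) :
    pder i (fun y => f y / g y) x = (pder i f x - (f x / g x) * pder i g x) / g x := by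
  have h : f = fun y => (f y / g y) * g y :=
    funext fun y => (div_mul_cancel₀ _ (hg0 y)).symm
  have h2 := congrArg (fun φ => pder i φ x) h
  rw [pder_mul' i hfg hg] at h2
  have hgx := hg0 x
  field_simp at h2 ⊢
  linarith [h2]

/-- The integral of a partial derivative of a `C¹` compactly supported function vanishes. -/
lemma integral_pder_eq_zero {d : ℕ} (i : Fin d) {F : (Fin d → ℝ) → ℝ}
    (hF : ContDiff ℝ 1 F) (hFs : HasCompactSupport F) :
    ∫ x, pder i F x = 0 := by
  have hFd : Differentiable ℝ F := hF.differentiable one_ne_zero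
  have hcFd : Continuous fun x => fderiv ℝ F x (Pi.single i 1) :=
    ((hF.fderiv_right (m := 0) (by norm_num)).clm_apply contDiff_const).continuous
  have hsFd : HasCompactSupport fun x => fderiv ℝ F x (Pi.single i 1) := by
    apply HasCompactSupport.intro hFs
    intro x hx
    have h0 : fderiv ℝ F x = 0 := by
      by_contra h
      exact hx (support_fderiv_subset ℝ (Function.mem_support.2 h))
    simp [h0]
  have key := integral_mul_fderiv_eq_neg_fderiv_mul_of_integrable
    (μ := volume) (f := F) (g := fun _ => (1 : ℝ)) (v := Pi.single i 1)
    (by simpa using hcFd.integrable_of_hasCompactSupport hsFd)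
    (by simp only [fderiv_const_apply, Pi.zero_apply, ContinuousLinearMap.zero_apply, mul_zero]
        exact integrable_zero _ _ _)
    (by simpa using (hF.continuous.integrable_of_hasCompactSupport hFs))
    (fun x _ => hFd x) (fun x _ => differentiable_const (1 : ℝ) x)
  simp only [fderiv_const_apply, Pi.zero_apply, ContinuousLinearMap.zero_apply, mul_zero, mul_one,
    integral_zero] at key
  simp only [pder]
  linarith [key]

/-- For twice continuously differentiable positive Lebesgue probability
densities `p, q` on `ℝ^d` and a continuously differentiable nonnegative weight function `w`
with compact support, the expected multivariate weighted Hyvärinen score difference under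
`q` equals `∫ Σ_i (∂_i p/p − ∂_i q/q)²·q·w ≥ 0`. -/
theorem multivariate_weighted_hyvarinen_divergence
    {d : ℕ} (p q w : (Fin d → ℝ) → ℝ)
    (hp : ContDiff ℝ 2 p) (hq : ContDiff ℝ 2 q)
    (hppos : ∀ x, 0 < p x) (hqpos : ∀ x, 0 < q x)
    (hpInt : ∫ x, p x = 1) (hqInt : ∫ x, q x = 1)
    (hw : ContDiff ℝ 1 w) (hwpos : ∀ x, 0 ≤ w x) (hwsupp : HasCompactSupport w) :
    (∫ x, ShatD w p x * q x) - (∫ x, ShatD w q x * q x)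
        = ∫ x, (∑ i : Fin d, (pder i p x / p x - pder i q x / q x) ^ 2) * q x * w x ∧
      0 ≤ ∫ x, (∑ i : Fin d, (pder i p x / p x - pder i q x / q x) ^ 2) * q x * w x := by
  have hpne : ∀ x, p x ≠ 0 := fun x => (hppos x).ne'
  have hqne : ∀ x, q x ≠ 0 := fun x => (hqpos x).ne'
  have hpC1 : ContDiff ℝ 1 p := hp.of_le one_le_two
  have hqC1 : ContDiff ℝ 1 q := hq.of_le one_le_two
  -- smoothness of partial derivatives
  have hdp : ∀ i : Fin d, ContDiff ℝ 1 (pder i p) := fun i =>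
    (hp.fderiv_right (m := 1) (by norm_num)).clm_apply contDiff_const
  have hdq : ∀ i : Fin d, ContDiff ℝ 1 (pder i q) := fun i =>
    (hq.fderiv_right (m := 1) (by norm_num)).clm_apply contDiff_const
  have hdw : ∀ i : Fin d, Continuous (pder i w) := fun i =>
    ((hw.fderiv_right (m := 0) (by norm_num)).clm_apply contDiff_const).continuous
  have hddp : ∀ i : Fin d, Continuous (pder i (pder i p)) := fun i =>
    (((hdp i).fderiv_right (m := 0) (by norm_num)).clm_apply contDiff_const).continuous
  have hddq : ∀ i : Fin d, Continuous (pder i (pder i q)) := fun i =>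
    (((hdq i).fderiv_right (m := 0) (by norm_num)).clm_apply contDiff_const).continuous
  -- vanishing outside the support of w
  have hw0 : ∀ x ∉ tsupport w, w x = 0 := fun x hx => image_eq_zero_of_notMem_tsupport hx
  have hdw0 : ∀ (i : Fin d), ∀ x ∉ tsupport w, pder i w x = 0 := by
    intro i x hx
    have h0 : fderiv ℝ w x = 0 := by
      by_contra h
      exact hx (support_fderiv_subset ℝ (Function.mem_support.2 h))
    simp [pder, h0]
  -- the vector-field components used in integration by parts
  set G : Fin d → (Fin d → ℝ) → ℝ :=
    fun i x => pder i p x / p x - pder i q x / q x with hGdef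
  set F : Fin d → (Fin d → ℝ) → ℝ := fun i x => q x * w x * G i x with hFdef
  have hGc : ∀ i, ContDiff ℝ 1 (G i) := fun i =>
    ((hdp i).div hpC1 hpne).sub ((hdq i).div hqC1 hqne)
  have hFc : ∀ i, ContDiff ℝ 1 (F i) := fun i => (hqC1.mul hw).mul (hGc i)
  have hFs : ∀ i, HasCompactSupport (F i) := by
    intro i
    apply HasCompactSupport.intro hwsupp
    intro x hx
    simp [hFdef, hw0 x hx]
  have hzero : ∀ i, ∫ x, pder i (F i) x = 0 := fun i =>
    integral_pder_eq_zero i (hFc i) (hFs i)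
  -- continuity of the Hyvärinen scores
  have hScont : ∀ f : (Fin d → ℝ) → ℝ, ContDiff ℝ 2 f → (∀ x, f x ≠ 0) →
      Continuous (ShatD w f) := by
    intro f hf hfne
    have hfC1 : ContDiff ℝ 1 f := hf.of_le one_le_two
    have hdf : ∀ i : Fin d, ContDiff ℝ 1 (pder i f) := fun i =>
      (hf.fderiv_right (m := 1) (by norm_num)).clm_apply contDiff_const
    have hddf : ∀ i : Fin d, Continuous (pder i (pder i f)) := fun i =>
      (((hdf i).fderiv_right (m := 0) (by norm_num)).clm_apply contDiff_const).continuous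
    unfold ShatD
    apply continuous_finset_sum
    intro i _
    exact (((continuous_const.mul ((hddf i).div hf.continuous hfne)).mul
      hw.continuous).sub ((((hdf i).continuous.div hf.continuous hfne).pow 2).mul
        hw.continuous)).add
      ((continuous_const.mul ((hdf i).continuous.div hf.continuous hfne)).mul (hdw i))
  have hSsupp : ∀ f : (Fin d → ℝ) → ℝ,
      HasCompactSupport fun x => ShatD w f x * q x := by
    intro f
    apply HasCompactSupport.intro hwsupp
    intro x hx
    simp [ShatD, hw0 x hx, hdw0 _ x hx]
  have hInt1 : Integrable (fun x => ShatD w p x * q x) :=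
    ((hScont p hp hpne).mul hq.continuous).integrable_of_hasCompactSupport (hSsupp p)
  have hInt2 : Integrable (fun x => ShatD w q x * q x) :=
    ((hScont q hq hqne).mul hq.continuous).integrable_of_hasCompactSupport (hSsupp q)
  -- the target integrand
  have hTcont : Continuous fun x => (∑ i : Fin d, (G i x) ^ 2) * q x * w x :=
    ((continuous_finset_sum _ fun i _ => ((hGc i).continuous.pow 2)).mul
      hq.continuous).mul hw.continuous
  have hTsupp : HasCompactSupport fun x => (∑ i : Fin d, (G i x) ^ 2) * q x * w x := by
    apply HasCompactSupport.intro hwsupp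
    intro x hx
    simp [hw0 x hx]
  have hTInt : Integrable (fun x => (∑ i : Fin d, (G i x) ^ 2) * q x * w x) :=
    hTcont.integrable_of_hasCompactSupport hTsupp
  -- integrability of the divergence term
  have hDiInt : ∀ i : Fin d, Integrable (fun x => 2 * pder i (F i) x) := by
    intro i
    have hc : Continuous fun x => pder i (F i) x :=
      (((hFc i).fderiv_right (m := 0) (by norm_num)).clm_apply contDiff_const).continuous
    have hs : HasCompactSupport fun x => pder i (F i) x := by
      apply HasCompactSupport.intro (hFs i)
      intro x hx
      have h0 : fderiv ℝ (F i) x = 0 := by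
        by_contra h
        exact hx (support_fderiv_subset ℝ (Function.mem_support.2 h))
      simp [pder, h0]
    exact (continuous_const.mul hc).integrable_of_hasCompactSupport (hs.mul_left)
  have hDInt : Integrable (fun x => ∑ i : Fin d, 2 * pder i (F i) x) := by
    apply integrable_finset_sum
    intro i _
    exact hDiInt i
  -- the key pointwise identity
  have key : ∀ x, ShatD w p x * q x - ShatD w q x * q x
      = (∑ i : Fin d, (G i x) ^ 2) * q x * w x + ∑ i : Fin d, 2 * pder i (F i) x := by
    intro x
    have hFder : ∀ i : Fin d, pder i (F i) x
        = (pder i q x * w x + q x * pder i w x) * G i x + q x * w x * pder i (G i) x := by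
      intro i
      have h1 : pder i (F i) x
          = pder i (fun y => q y * w y) x * G i x + (q x * w x) * pder i (G i) x :=
        pder_mul' i ((hqC1.differentiable one_ne_zero x).mul (hw.differentiable one_ne_zero x))
          ((hGc i).differentiable one_ne_zero x)
      rw [h1, pder_mul' i (hqC1.differentiable one_ne_zero x) (hw.differentiable one_ne_zero x)]
    have hGder : ∀ i : Fin d, pder i (G i) x
        = (pder i (pder i p) x - (pder i p x / p x) * pder i p x) / p x
          - (pder i (pder i q) x - (pder i q x / q x) * pder i q x) / q x := by
      intro i
      have h1 : pder i (G i) x = pder i (fun y => pder i p y / p y) x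
          - pder i (fun y => pder i q y / q y) x :=
        pder_sub' i (((hdp i).div hpC1 hpne).differentiable one_ne_zero x)
          (((hdq i).div hqC1 hqne).differentiable one_ne_zero x)
      rw [h1,
        pder_div' i ((hdp i).differentiable one_ne_zero x)
          (((hdp i).div hpC1 hpne).differentiable one_ne_zero x)
          (hpC1.differentiable one_ne_zero x) hpne,
        pder_div' i ((hdq i).differentiable one_ne_zero x)
          (((hdq i).div hqC1 hqne).differentiable one_ne_zero x)
          (hqC1.differentiable one_ne_zero x) hqne]
    simp only [ShatD]
    rw [Finset.sum_mul, Finset.sum_mul, ← Finset.sum_sub_distrib, Finset.sum_mul,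
      Finset.sum_mul, ← Finset.sum_add_distrib]
    apply Finset.sum_congr rfl
    intro i _
    rw [hFder i, hGder i]
    simp only [hGdef]
    have hP := hpne x
    have hQ := hqne x
    field_simp
    ring
  refine ⟨?_, ?_⟩
  · rw [← integral_sub hInt1 hInt2]
    have heq : (fun x => ShatD w p x * q x - ShatD w q x * q x)
        = fun x => (∑ i : Fin d, (G i x) ^ 2) * q x * w x
          + ∑ i : Fin d, 2 * pder i (F i) x := funext key
    rw [heq, integral_add hTInt hDInt]
    have hD0 : ∫ x, ∑ i : Fin d, 2 * pder i (F i) x = 0 := by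
      rw [integral_finset_sum _ fun i _ => hDiInt i]
      apply Finset.sum_eq_zero
      intro i _
      rw [integral_const_mul, hzero i, mul_zero]
    rw [hD0, add_zero]
  · apply integral_nonneg
    intro x
    have h1 : 0 ≤ ∑ i : Fin d, (pder i p x / p x - pder i q x / q x) ^ 2 :=
      Finset.sum_nonneg fun i _ => sq_nonneg _
    have := (hqpos x).le
    have := hwpos x
    positivity

end
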